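/- The function w(x) = e^{-(x² + 2x)} satisfies |w'(x)|^{p-2}w''(x) ≥ x^p w(x)^{p-1} for all x ≥ 0 and any p > 1. -/

import Mathlib

open Real Filter

theorem stmt5 (p : ℝ) (hp : 1 < p) (x : ℝ) (hx : 0 ≤ x) :
    x ^ p * (Real.exp (-(x ^ 2 + 2 * x))) ^ (p - 1) ≤
      |deriv (fun t : ℝ => Real.exp (-(t ^ 2 + 2 * t))) x| ^ (p - 2) *
        deriv (deriv (fun t : ℝ => Real.exp (-(t ^ 2 + 2 * t)))) x := by
  have hd : ∀ t : ℝ, HasDerivAt (fun s : ℝ => Real.exp (-(s ^ 2 + 2 * s)))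
      (-(2 * t + 2) * Real.exp (-(t ^ 2 + 2 * t))) t := by
    intro t
    have h1 : HasDerivAt (fun s : ℝ => -(s ^ 2 + 2 * s)) (-(2 * t + 2)) t := by
      have h := (((hasDerivAt_pow 2 t)).add ((hasDerivAt_id t).const_mul 2)).neg
      exact h.congr_deriv (by simp)
    simpa [mul_comm] using h1.exp
  have hD : deriv (fun t : ℝ => Real.exp (-(t ^ 2 + 2 * t)))
      = fun t => -(2 * t + 2) * Real.exp (-(t ^ 2 + 2 * t)) := by
    funext t; exact (hd t).deriv
  have ha : HasDerivAt (fun t : ℝ => -(2 * t + 2)) (-2) x := by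
    exact ((((hasDerivAt_id x).const_mul 2)).add_const 2).neg.congr_deriv (by simp)
  have hg : HasDerivAt (fun t : ℝ => -(2 * t + 2) * Real.exp (-(t ^ 2 + 2 * t)))
      (((2 * x + 2) ^ 2 - 2) * Real.exp (-(x ^ 2 + 2 * x))) x := by
    have h := ha.mul (hd x)
    exact h.congr_deriv (by ring)
  have hD2 : deriv (deriv (fun t : ℝ => Real.exp (-(t ^ 2 + 2 * t)))) x
      = ((2 * x + 2) ^ 2 - 2) * Real.exp (-(x ^ 2 + 2 * x)) := by
    rw [hD]; exact hg.deriv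
  have hE : (0:ℝ) < Real.exp (-(x ^ 2 + 2 * x)) := Real.exp_pos _
  set E := Real.exp (-(x ^ 2 + 2 * x)) with hEdef
  have habs : |deriv (fun t : ℝ => Real.exp (-(t ^ 2 + 2 * t))) x| = (2 * x + 2) * E := by
    rw [hD]
    rw [abs_mul, abs_neg, abs_of_nonneg (by linarith : (0:ℝ) ≤ 2 * x + 2),
      abs_of_pos hE]
  rw [habs, hD2]
  set u := 2 * x + 2 with hudef
  have hu0 : (0:ℝ) < u := by simp [hudef]; linarith
  have hu2 : (2:ℝ) ≤ u := by simp [hudef]; linarith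
  have h2 : u ^ p = u ^ (p - 2) * u ^ 2 := by
    rw [← Real.rpow_natCast u 2, ← Real.rpow_add hu0]
    norm_num
  have hA1 : ((2:ℝ) * x) ^ p ≤ u ^ p :=
    Real.rpow_le_rpow (by positivity) (by rw [hudef]; linarith) (by linarith)
  have hA2 : ((2:ℝ) * x) ^ p = 2 ^ p * x ^ p := Real.mul_rpow (by norm_num) hx
  have hA3 : (2:ℝ) ≤ 2 ^ p := by
    calc (2:ℝ) = 2 ^ (1:ℝ) := (Real.rpow_one 2).symm
      _ ≤ 2 ^ p := Real.rpow_le_rpow_of_exponent_le (by norm_num) hp.le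
  have hxp : (0:ℝ) ≤ x ^ p := Real.rpow_nonneg hx p
  have hA : 2 * x ^ p ≤ u ^ p := by
    have := mul_le_mul_of_nonneg_right hA3 hxp
    nlinarith
  have hB : 4 * u ^ (p - 2) ≤ u ^ p := by
    rw [h2]
    have h4 : (4:ℝ) ≤ u ^ 2 := by nlinarith
    have hup : (0:ℝ) ≤ u ^ (p - 2) := Real.rpow_nonneg hu0.le _
    nlinarith
  have key : x ^ p ≤ u ^ (p - 2) * (u ^ 2 - 2) := by
    have hexp : u ^ (p - 2) * (u ^ 2 - 2) = u ^ p - 2 * u ^ (p - 2) := by rw [h2]; ring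
    rw [hexp]; linarith
  have hE1 : E ^ (p - 1) = E ^ (p - 2) * E := by
    rw [show p - 1 = (p - 2) + 1 by ring, Real.rpow_add hE, Real.rpow_one]
  calc x ^ p * E ^ (p - 1) ≤ (u ^ (p - 2) * (u ^ 2 - 2)) * E ^ (p - 1) := by
        apply mul_le_mul_of_nonneg_right key (Real.rpow_nonneg hE.le _)
    _ = (u * E) ^ (p - 2) * ((u ^ 2 - 2) * E) := by
        rw [Real.mul_rpow hu0.le hE.le, hE1]; ring
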